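/- arXiv:2011.02046 — 7 statements merged into one kernel-verified Lean document; each statement's English description precedes it below -/
import Mathlib

section
/- Let A, B : I → ℕ be cost functions, each satisfying the bounded-shared-cost property. If there exist bijections π, φ : I ≃ I with A x ≤ B (π x) for all x : I and B x ≤ A (φ x) for all x : I (i.e., A ≼c B and B ≼c A), then for every m : ℕ the finite sets {x : I | A x ≤ m} and {x : I | B x ≤ m} have the same cardinality. (This is the quantitative content of the paper's lemma that, for cost measures with the bounded-shared-cost property, it is impossible for each of two algorithms to be strictly better than the other under cyclic analysis.) -/
/-- If `A ≼c B` and `B ≼c A` for cost functions with the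
bounded-shared-cost property, then for every `m` the finite sets
`{x | A x ≤ m}` and `{x | B x ≤ m}` have the same cardinality. -/
theorem stmt_1 {I : Type*} (A B : I → ℕ)
    (hA : ∀ n : ℕ, {x : I | A x = n}.Finite)
    (hB : ∀ n : ℕ, {x : I | B x = n}.Finite)
    (π : I ≃ I) (hπ : ∀ x : I, A x ≤ B (π x))
    (φ : I ≃ I) (hφ : ∀ x : I, B x ≤ A (φ x)) (m : ℕ) :
    {x : I | A x ≤ m}.ncard = {x : I | B x ≤ m}.ncard := by
  have hAfin : {x : I | A x ≤ m}.Finite := by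
    have : {x : I | A x ≤ m} ⊆ ⋃ n ∈ Finset.range (m+1), {x : I | A x = n} := by
      intro x hx
      simp only [Set.mem_iUnion, Finset.mem_range]
      exact ⟨A x, Nat.lt_succ_of_le hx, rfl⟩
    exact (Set.Finite.biUnion (Finset.range (m+1)).finite_toSet (fun n _ => hA n)).subset this
  have hBfin : {x : I | B x ≤ m}.Finite := by
    have : {x : I | B x ≤ m} ⊆ ⋃ n ∈ Finset.range (m+1), {x : I | B x = n} := by
      intro x hx
      simp only [Set.mem_iUnion, Finset.mem_range]
      exact ⟨B x, Nat.lt_succ_of_le hx, rfl⟩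
    exact (Set.Finite.biUnion (Finset.range (m+1)).finite_toSet (fun n _ => hB n)).subset this
  apply le_antisymm
  · calc {x : I | A x ≤ m}.ncard = (φ.symm '' {x : I | A x ≤ m}).ncard :=
          (Set.ncard_image_of_injective _ φ.symm.injective).symm
      _ ≤ {x : I | B x ≤ m}.ncard := by
          apply Set.ncard_le_ncard _ hBfin
          rintro y ⟨x, hx, rfl⟩
          exact le_trans (hφ _) (by simpa using hx)
  · calc {x : I | B x ≤ m}.ncard = (π.symm '' {x : I | B x ≤ m}).ncard :=
          (Set.ncard_image_of_injective _ π.symm.injective).symm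
      _ ≤ {x : I | A x ≤ m}.ncard := by
          apply Set.ncard_le_ncard _ hAfin
          rintro y ⟨x, hx, rfl⟩
          exact le_trans (hπ _) (by simpa using hx)
end

section
/- Let Y be an infinite type and c : Y → ℕ a function all of whose fibers are finite. Then Y can be enumerated in nondecreasing order of cost: there exists a bijection e : ℕ ≃ Y such that for all i j : ℕ, i ≤ j implies c (e i) ≤ c (e j). -/
/-- An infinite type with a finite-fibered cost function can be
enumerated in nondecreasing order of cost. -/
theorem stmt_4 {Y : Type*} [Infinite Y] (c : Y → ℕ)
    (hc : ∀ n : ℕ, {y : Y | c y = n}.Finite) :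
    ∃ e : ℕ ≃ Y, ∀ i j : ℕ, i ≤ j → c (e i) ≤ c (e j) := by
  classical
  -- Y is countable
  have hcount : Countable Y := by
    rw [← Set.countable_univ_iff]
    have : (Set.univ : Set Y) = ⋃ n, {y : Y | c y = n} := by
      ext y; simp
    rw [this]
    exact Set.countable_iUnion fun n => (hc n).countable
  obtain ⟨f⟩ := nonempty_embedding_nat Y
  -- embed Y into Lex (ℕ × ℕ)
  let g : Y → Lex (ℕ × ℕ) := fun y => toLex (c y, f y)
  have ginj : Function.Injective g := by
    intro a b hab
    have : (c a, f a) = (c b, f b) := congrArg ofLex hab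
    exact f.injective (congrArg Prod.snd this)
  -- key finiteness: for any p, the elements of Y mapped ≤ p are finite
  have hfin : ∀ p : Lex (ℕ × ℕ), {y : Y | g y ≤ p}.Finite := by
    intro p
    have hsub : {y : Y | g y ≤ p} ⊆ {y : Y | c y ≤ (ofLex p).1} := by
      intro y hy
      rcases Prod.Lex.le_iff.mp hy with h | ⟨h, _⟩
      · exact le_of_lt h
      · exact le_of_eq h
    refine Set.Finite.subset ?_ hsub
    have : {y : Y | c y ≤ (ofLex p).1} = ⋃ n ∈ Finset.range ((ofLex p).1 + 1), {y : Y | c y = n} := by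
      ext y
      simp [Nat.lt_succ_iff]
    rw [this]
    exact Set.Finite.biUnion (Finset.range _).finite_toSet fun n _ => hc n
  -- the range of g as a subtype
  let s : Set (Lex (ℕ × ℕ)) := Set.range g
  let eg : Y ≃ s := Equiv.ofInjective g ginj
  haveI : Infinite s := Infinite.of_surjective eg.symm eg.symm.surjective
  -- finiteness of initial segments in s
  have hIic : ∀ x : s, (Set.Iic x).Finite := by
    intro x
    have : Set.Iic x ⊆ eg '' {y : Y | g y ≤ (x : Lex (ℕ × ℕ))} := by
      rintro ⟨z, hz⟩ hle
      obtain ⟨y, rfl⟩ := hz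
      exact ⟨y, hle, rfl⟩
    exact Set.Finite.subset (Set.Finite.image _ (hfin x)) this
  haveI : LocallyFiniteOrder s :=
    LocallyFiniteOrder.ofFiniteIcc fun a b => (hIic b).subset Set.Icc_subset_Iic_self
  haveI : NoMaxOrder s := by
    constructor
    intro x
    have h1 : ¬ (Set.univ : Set s) ⊆ Set.Iic x := fun h =>
      Set.Infinite.mono h (Set.infinite_univ) (hIic x)
    obtain ⟨z, -, hz⟩ := Set.not_subset.mp h1
    exact ⟨z, lt_of_not_ge hz⟩
  haveI hwfs : WellFoundedLT s := Subtype.wellFoundedLT _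
  haveI : OrderBot s :=
    { bot := hwfs.wf.min Set.univ ⟨eg (Classical.arbitrary Y), trivial⟩
      bot_le := fun a => not_lt.mp (hwfs.wf.not_lt_min Set.univ trivial) }
  -- the order iso
  letI hS : SuccOrder s := LinearLocallyFiniteOrder.succOrder s
  letI hP : PredOrder s := LinearLocallyFiniteOrder.predOrder s
  letI hA : @IsSuccArchimedean s _ hS := inferInstance
  let φ : s ≃o ℕ := @orderIsoNatOfLinearSuccPredArch s _ hS hP hA _ _
  refine ⟨(φ.symm.toEquiv).trans eg.symm, ?_⟩
  intro i j hij
  have h1 : φ.symm i ≤ φ.symm j := φ.symm.monotone hij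
  have h2 : ∀ x : s, g (eg.symm x) = (x : Lex (ℕ × ℕ)) := fun x =>
    congrArg Subtype.val (eg.apply_symm_apply x)
  have hle : g (eg.symm (φ.symm i)) ≤ g (eg.symm (φ.symm j)) := by
    rw [h2 _, h2 _]; exact_mod_cast h1
  rcases Prod.Lex.le_iff.mp hle with h | ⟨h, _⟩
  · exact le_of_lt h
  · exact le_of_eq h
end

section
/- Let Y be an infinite type, c : Y → ℕ a function with finite fibers, and m : ℕ with 1 ≤ m. Then there exists a bijection g : Fin m × Y ≃ Y such that for every j : Fin m and y : Y, c y ≤ c (g (j, y)). (This is the 'unzipping' step: m indexed copies of Y can be bijectively remapped onto Y so that every image point has cost at least that of its source.) -/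
/-- "unzipping": `m` indexed copies of an infinite type `Y` with
a finite-fibered cost function `c` can be bijectively remapped onto `Y` so that
every image point has cost at least that of its source. -/
theorem stmt_5 {Y : Type*} [Infinite Y] (c : Y → ℕ)
    (hc : ∀ n : ℕ, {y : Y | c y = n}.Finite) (m : ℕ) (hm : 1 ≤ m) :
    ∃ g : Fin m × Y ≃ Y, ∀ (j : Fin m) (y : Y), c y ≤ c (g (j, y)) := by
  classical
  have hcount : Countable Y := by
    have huniv : (Set.univ : Set Y) = ⋃ n, {y | c y = n} := by ext y; simp
    have : (Set.univ : Set Y).Countable := by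
      rw [huniv]; exact Set.countable_iUnion fun n => (hc n).countable
    exact Set.countable_univ_iff.mp this
  obtain ⟨ι, hι⟩ := (countable_iff_exists_injective Y).mp hcount
  set r : Y → Y → Prop := fun z y => c z < c y ∨ (c z = c y ∧ ι z < ι y) with hr
  have rtrans : ∀ {a b d}, r a b → r b d → r a d := by
    rintro a b d (h | ⟨h1, h2⟩) (h' | ⟨h1', h2'⟩) <;>
      exact show c _ < c _ ∨ (c _ = c _ ∧ ι _ < ι _) by omega
  have rirrefl : ∀ a, ¬ r a a := by rintro a (h | ⟨h1, h2⟩) <;> omega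
  have rtrich : ∀ a b, r a b ∨ a = b ∨ r b a := by
    intro a b
    rcases lt_trichotomy (c a) (c b) with h | h | h
    · exact Or.inl (Or.inl h)
    · rcases lt_trichotomy (ι a) (ι b) with h' | h' | h'
      · exact Or.inl (Or.inr ⟨h, h'⟩)
      · exact Or.inr (Or.inl (hι h'))
      · exact Or.inr (Or.inr (Or.inr ⟨h.symm, h'⟩))
    · exact Or.inr (Or.inr (Or.inl h))
  have hpred : ∀ y, {z | r z y}.Finite := by
    intro y
    apply Set.Finite.subset (Set.Finite.biUnion (Set.finite_Iic (c y)) fun n _ => hc n)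
    rintro z (h | ⟨h1, _⟩) <;> exact Set.mem_biUnion (by simp; omega) rfl
  set f : Y → ℕ := fun y => ({z | r z y}).ncard with hf
  have hmono : ∀ {z y}, r z y → f z < f y := by
    intro z y h
    apply Set.ncard_lt_ncard _ (hpred y)
    constructor
    · intro w hw; exact rtrans hw h
    · intro hsub; exact rirrefl z (hsub h)
  have hinj : Function.Injective f := by
    intro a b hab
    rcases rtrich a b with h | h | h
    · exact absurd hab (hmono h).ne
    · exact h
    · exact absurd hab.symm (hmono h).ne
  have hdc : ∀ y k, k < f y → ∃ z, f z = k := by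
    intro y k hk
    have hs := hpred y
    have hcard : hs.toFinset.card = f y := by
      exact (Set.ncard_eq_toFinset_card _ hs).symm
    have himg : hs.toFinset.image f = Finset.range (f y) := by
      apply Finset.eq_of_subset_of_card_le
      · intro n hn
        simp only [Finset.mem_image, Set.Finite.mem_toFinset] at hn
        obtain ⟨z, hz, rfl⟩ := hn
        exact Finset.mem_range.mpr (hmono hz)
      · rw [Finset.card_range, Finset.card_image_of_injective _ hinj, hcard]
    have hmem : k ∈ hs.toFinset.image f := by rw [himg]; exact Finset.mem_range.mpr hk
    simp only [Finset.mem_image, Set.Finite.mem_toFinset] at hmem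
    obtain ⟨z, _, hz⟩ := hmem
    exact ⟨z, hz⟩
  have hsurj : Function.Surjective f := by
    intro n
    have hinf : (Set.range f).Infinite := Set.infinite_range_of_injective hinj
    obtain ⟨b, hb, hnb⟩ := hinf.exists_gt n
    obtain ⟨y, rfl⟩ := hb
    exact hdc y n hnb
  let F : Y ≃ ℕ := Equiv.ofBijective f ⟨hinj, hsurj⟩
  have : NeZero m := ⟨by omega⟩
  let G : Fin m × Y ≃ Y :=
    ((Equiv.refl (Fin m)).prodCongr F).trans
      ((Equiv.prodComm (Fin m) ℕ).trans (((Nat.divModEquiv m).symm).trans F.symm))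
  refine ⟨G, fun j y => ?_⟩
  have hGval : f (G (j, y)) = f y * m + (j : ℕ) := by
    show F (F.symm ((Nat.divModEquiv m).symm (F y, j))) = f y * m + (j : ℕ)
    rw [Equiv.apply_symm_apply]
    rfl
  have hle : f y ≤ f (G (j, y)) := by
    rw [hGval]; nlinarith [j.2]
  by_contra h
  push_neg at h
  have hlt : f (G (j, y)) < f y := hmono (Or.inl h)
  omega
end

section
/- Let A, B : I → ℕ be cost functions, each satisfying the bounded-shared-cost property, and let f : I → I be a surjective map with A x ≤ B (f x) for every x : I. Suppose the set of points y : I that have at least two distinct f-preimages (i.e., there exist x₁ ≠ x₂ with f x₁ = y and f x₂ = y) is infinite. Then there exists m : ℕ such that the finite set {x : I | B x ≤ m} has strictly smaller cardinality than the finite set {x : I | A x ≤ m}. -/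
lemma le_finite {I : Type*} (A : I → ℕ) (hA : ∀ n : ℕ, {x : I | A x = n}.Finite)
    (m : ℕ) : {x : I | A x ≤ m}.Finite := by
  have : {x : I | A x ≤ m} ⊆ ⋃ n ∈ Finset.range (m + 1), {x : I | A x = n} := by
    intro x hx
    simp only [Set.mem_iUnion, Finset.mem_range]
    exact ⟨A x, Nat.lt_succ_of_le hx, rfl⟩
  exact (Set.Finite.biUnion (Finset.range (m + 1)).finite_toSet fun n _ => hA n).subset this

/-- If `f : I → I` is surjective with `A x ≤ B (f x)` everywhere,
both cost functions have the bounded-shared-cost property, and infinitely many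
points have at least two distinct `f`-preimages, then for some `m` the finite
set `{x | B x ≤ m}` is strictly smaller than `{x | A x ≤ m}`. -/
theorem stmt_6 {I : Type*} (A B : I → ℕ)
    (hA : ∀ n : ℕ, {x : I | A x = n}.Finite)
    (hB : ∀ n : ℕ, {x : I | B x = n}.Finite)
    (f : I → I) (hf : Function.Surjective f)
    (hle : ∀ x : I, A x ≤ B (f x))
    (hinf : {y : I | ∃ x₁ x₂ : I, x₁ ≠ x₂ ∧ f x₁ = y ∧ f x₂ = y}.Infinite) :
    ∃ m : ℕ, {x : I | B x ≤ m}.ncard < {x : I | A x ≤ m}.ncard := by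
  obtain ⟨y₀, x₁, x₂, hne, hfx₁, hfx₂⟩ := hinf.nonempty
  -- choose a section of f
  choose s hs using hf
  set m := B y₀ with hm
  -- pick the preimage of y₀ not equal to s y₀
  obtain ⟨x, hfx, hxs⟩ : ∃ x, f x = y₀ ∧ x ≠ s y₀ := by
    by_cases h1 : x₁ = s y₀
    · exact ⟨x₂, hfx₂, fun h => hne (h1 ▸ h ▸ rfl)⟩
    · exact ⟨x₁, hfx₁, h1⟩
  refine ⟨m, ?_⟩
  have hSfin := le_finite B hB m
  have hTfin := le_finite A hA m
  have hsinj : Function.Injective s := by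
    intro a b hab
    rw [← hs a, ← hs b, hab]
  have hsub : insert x (s '' {x : I | B x ≤ m}) ⊆ {x : I | A x ≤ m} := by
    rintro z (rfl | ⟨w, hw, rfl⟩)
    · exact le_of_le_of_eq (hle _) (by rw [hfx])
    · calc A (s w) ≤ B (f (s w)) := hle _
        _ = B w := by rw [hs]
        _ ≤ m := hw
  have hnotmem : x ∉ s '' {x : I | B x ≤ m} := by
    rintro ⟨w, _, rfl⟩
    have : w = y₀ := by rw [← hs w, hfx]
    exact hxs (by rw [this])
  calc {x : I | B x ≤ m}.ncard = (s '' {x : I | B x ≤ m}).ncard :=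
        (Set.ncard_image_of_injective _ hsinj).symm
    _ < (insert x (s '' {x : I | B x ≤ m})).ncard := by
        rw [Set.ncard_insert_of_notMem hnotmem (hSfin.image s)]
        exact Nat.lt_succ_self _
    _ ≤ {x : I | A x ≤ m}.ncard := Set.ncard_le_ncard hsub hTfin
end

section
/- ('Unzipping' equivalence.) Let A, B : I → ℕ be cost functions, each satisfying the bounded-shared-cost property. Let f : I → I be a natural surjective mapping that is not injective; that is: f is surjective, every fiber f ⁻¹' {y} is finite, for every m : ℕ the set {y : I | the fiber f ⁻¹' {y} has exactly m elements} is either empty or infinite, and f is not injective. If A x ≤ B (f x) for every x : I, then A is strictly better than B under cyclic analysis: (i) there exists a bijection g : I ≃ I with A x ≤ B (g x) for all x : I, and (ii) there is no bijection h : I ≃ I with B x ≤ A (h x) for all x : I. -/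
/-- Greedy construction of an injective selector for a sequence of infinite sets. -/
lemma greedy_injective_aux {I : Type*} (S : ℕ → Set I) (hS : ∀ n, (S n).Infinite) :
    ∃ F : ℕ → I, Function.Injective F ∧ ∀ n, F n ∈ S n := by
  classical
  let pick : ℕ → List I → I := fun n l =>
    ((hS n).diff (l.toFinset.finite_toSet)).nonempty.some
  have hpick : ∀ n l, pick n l ∈ S n ∧ pick n l ∉ l := by
    intro n l
    have h := ((hS n).diff (l.toFinset.finite_toSet)).nonempty.some_mem
    simp only [Set.mem_diff, Finset.mem_coe, List.mem_toFinset] at h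
    exact h
  let L : ℕ → List I := fun n => Nat.rec [] (fun k lk => lk ++ [pick k lk]) n
  have hL : ∀ n, L (n + 1) = L n ++ [pick n (L n)] := fun n => rfl
  have hmono : ∀ m n, m ≤ n → ∀ a, a ∈ L m → a ∈ L n := by
    intro m n hmn
    induction n, hmn using Nat.le_induction with
    | base => exact fun a h => h
    | succ n hmn ih =>
      intro a ha
      rw [hL]
      exact List.mem_append_left _ (ih a ha)
  have key : ∀ m n, m < n → pick m (L m) ≠ pick n (L n) := by
    intro m n hmn hne
    have h1 : pick m (L m) ∈ L n := by
      apply hmono (m + 1) n hmn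
      rw [hL]
      exact List.mem_append_right _ (List.mem_singleton.mpr rfl)
    rw [hne] at h1
    exact (hpick n (L n)).2 h1
  refine ⟨fun n => pick n (L n), ?_, fun n => (hpick n (L n)).1⟩
  intro m n hmn
  rcases lt_trichotomy m n with h | h | h
  · exact absurd hmn (key m n h)
  · exact h
  · exact absurd hmn.symm (key n m h)

/-- Schröder–Bernstein with the extra property that each point is matched along
one of the two given injections. -/
lemma sb_with_property {α β : Type*} (F : α → β) (G : β → α)
    (hF : Function.Injective F) (hG : Function.Injective G) :
    ∃ h : α ≃ β, ∀ x, h x = F x ∨ G (h x) = x := by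
  classical
  rcases isEmpty_or_nonempty β with hβ | hβ
  · haveI : IsEmpty α := Function.isEmpty F
    exact ⟨Equiv.equivOfIsEmpty α β, fun x => isEmptyElim x⟩
  let C : Set α := ⋃ n : ℕ, (G ∘ F)^[n] '' (Set.range G)ᶜ
  have hC0 : (Set.range G)ᶜ ⊆ C := by
    intro x hx
    exact Set.mem_iUnion.2 ⟨0, by simpa using hx⟩
  have hC1 : ∀ x, x ∉ C → x ∈ Set.range G := by
    intro x hx
    by_contra h
    exact hx (hC0 h)
  have hC2 : ∀ x ∈ C, G (F x) ∈ C := by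
    intro x hx
    rcases Set.mem_iUnion.1 hx with ⟨n, z, hz, hzx⟩
    refine Set.mem_iUnion.2 ⟨n + 1, z, hz, ?_⟩
    rw [Function.iterate_succ_apply', hzx]
    rfl
  let H : α → β := fun x => if x ∈ C then F x else Function.invFun G x
  have hHin : ∀ x ∈ C, H x = F x := fun x hx => if_pos hx
  have hHout : ∀ x, x ∉ C → G (H x) = x := by
    intro x hx
    show G (if x ∈ C then F x else Function.invFun G x) = x
    rw [if_neg hx]
    exact Function.invFun_eq (hC1 x hx)
  have hinj : Function.Injective H := by
    intro x₁ x₂ he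
    by_cases h1 : x₁ ∈ C <;> by_cases h2 : x₂ ∈ C
    · rw [hHin x₁ h1, hHin x₂ h2] at he
      exact hF he
    · exfalso
      have e2 : G (H x₂) = x₂ := hHout x₂ h2
      rw [← he, hHin x₁ h1] at e2
      exact h2 (e2 ▸ hC2 x₁ h1)
    · exfalso
      have e1 : G (H x₁) = x₁ := hHout x₁ h1
      rw [he, hHin x₂ h2] at e1
      exact h1 (e1 ▸ hC2 x₂ h2)
    · have e1 := hHout x₁ h1
      have e2 := hHout x₂ h2
      rw [he] at e1
      exact e1.symm.trans e2
  have hsurjH : Function.Surjective H := by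
    intro y
    by_cases hy : G y ∈ C
    · rcases Set.mem_iUnion.1 hy with ⟨n, z, hz, hzy⟩
      cases n with
      | zero =>
        simp only [Function.iterate_zero_apply] at hzy
        exact absurd ⟨y, rfl⟩ (hzy ▸ hz)
      | succ m =>
        rw [Function.iterate_succ_apply'] at hzy
        simp only [Function.comp_apply] at hzy
        have hx : (G ∘ F)^[m] z ∈ C := Set.mem_iUnion.2 ⟨m, z, hz, rfl⟩
        have hy' : F ((G ∘ F)^[m] z) = y := hG hzy
        exact ⟨_, (hHin _ hx).trans hy'⟩
    · refine ⟨G y, ?_⟩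
      exact hG (hHout (G y) hy)
  refine ⟨Equiv.ofBijective H ⟨hinj, hsurjH⟩, fun x => ?_⟩
  by_cases hx : x ∈ C
  · exact Or.inl (hHin x hx)
  · exact Or.inr (hHout x hx)

/-- "unzipping" equivalence: a natural surjective, non-injective
mapping `f` with `A x ≤ B (f x)` everywhere (for cost functions with the
bounded-shared-cost property) shows that `A` is strictly better than `B`
under cyclic analysis. -/
theorem stmt_7 {I : Type*} (A B : I → ℕ)
    (hA : ∀ n : ℕ, {x : I | A x = n}.Finite)
    (hB : ∀ n : ℕ, {x : I | B x = n}.Finite)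
    (f : I → I) (hsurj : Function.Surjective f)
    (hfin : ∀ y : I, (f ⁻¹' {y}).Finite)
    (hnat : ∀ m : ℕ, {y : I | (f ⁻¹' {y}).ncard = m} = ∅ ∨
      {y : I | (f ⁻¹' {y}).ncard = m}.Infinite)
    (hninj : ¬ Function.Injective f)
    (hle : ∀ x : I, A x ≤ B (f x)) :
    (∃ g : I ≃ I, ∀ x : I, A x ≤ B (g x)) ∧
      ¬ ∃ h : I ≃ I, ∀ x : I, B x ≤ A (h x) := by
  classical
  have hinf : Infinite I := by
    rw [← not_finite_iff_infinite]
    intro h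
    exact hninj (Finite.injective_iff_surjective.mpr hsurj)
  have hAle : ∀ n : ℕ, {x : I | A x ≤ n}.Finite := by
    intro n
    apply Set.Finite.subset ((Set.finite_Iic n).biUnion (fun k _ => hA k))
    intro x hx
    exact Set.mem_biUnion hx rfl
  have hBle : ∀ n : ℕ, {x : I | B x ≤ n}.Finite := by
    intro n
    apply Set.Finite.subset ((Set.finite_Iic n).biUnion (fun k _ => hB k))
    intro x hx
    exact Set.mem_biUnion hx rfl
  set σ : I → I := Function.surjInv hsurj with hσ
  have hσf : ∀ y, f (σ y) = y := fun y => Function.surjInv_eq hsurj y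
  have hσinj : Function.Injective σ := Function.injective_surjInv hsurj
  have hσle : ∀ y, A (σ y) ≤ B y := by
    intro y
    have h := hle (σ y)
    rwa [hσf y] at h
  have hcount : ∀ n : ℕ, {y : I | B y ≤ n}.ncard ≤ {x : I | A x ≤ n}.ncard := by
    intro n
    exact Set.ncard_le_ncard_of_injOn σ (fun y hy => le_trans (hσle y) hy)
      hσinj.injOn (hAle n)
  constructor
  · -- part (i)
    have hcnt : Countable I := by
      have huniv : (Set.univ : Set I).Countable := by
        apply Set.Countable.mono ?_ (Set.countable_iUnion fun n => (hA n).countable)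
        intro x _
        exact Set.mem_iUnion.2 ⟨A x, rfl⟩
      exact Set.countable_univ_iff.mp huniv
    letI : Encodable I := Encodable.ofCountable I
    letI : Denumerable I := Denumerable.ofEncodableOfInfinite I
    let e : ℕ ≃ I := (Denumerable.eqv I).symm
    obtain ⟨F0, hF0inj, hF0mem⟩ := greedy_injective_aux
      (fun n => {y : I | A (e n) ≤ B y}) (by
        intro n
        have hfin' : {y : I | B y < A (e n)}.Finite :=
          (hBle (A (e n))).subset (fun y hy => Set.mem_setOf.mpr (le_of_lt (Set.mem_setOf.mp hy)))
        apply hfin'.infinite_compl.mono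
        intro y hy
        have hy' : ¬ B y < A (e n) := hy
        exact Set.mem_setOf.mpr (not_lt.mp hy'))
    let F : I → I := fun x => F0 (e.symm x)
    have hFinj : Function.Injective F := hF0inj.comp e.symm.injective
    have hFle : ∀ x, A x ≤ B (F x) := by
      intro x
      have h := hF0mem (e.symm x)
      rwa [e.apply_symm_apply] at h
    let t : I → Finset I := fun y => (hAle (B y)).toFinset
    have hmem_t : ∀ y x, x ∈ t y ↔ A x ≤ B y := by
      intro y x
      simp [t, Set.Finite.mem_toFinset]
    have hhall : ∀ s : Finset I, s.card ≤ (s.biUnion t).card := by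
      intro s
      rcases s.eq_empty_or_nonempty with rfl | hs
      · simp
      obtain ⟨y₀, hy₀s, hy₀max⟩ := s.exists_max_image B hs
      have h2 : s.card ≤ {y : I | B y ≤ B y₀}.ncard := by
        rw [← Set.ncard_coe_finset]
        exact Set.ncard_le_ncard (fun y hy => hy₀max y hy) (hBle (B y₀))
      have h3 : {x : I | A x ≤ B y₀}.ncard ≤ (s.biUnion t).card := by
        rw [← Set.ncard_coe_finset]
        apply Set.ncard_le_ncard ?_ (s.biUnion t).finite_toSet
        intro x hx
        exact Finset.mem_coe.2 (Finset.mem_biUnion.2 ⟨y₀, hy₀s, (hmem_t y₀ x).2 hx⟩)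
      exact h2.trans ((hcount (B y₀)).trans h3)
    obtain ⟨G, hGinj, hGmem⟩ := (Finset.all_card_le_biUnion_card_iff_exists_injective t).mp hhall
    have hGle : ∀ y, A (G y) ≤ B y := fun y => (hmem_t y (G y)).1 (hGmem y)
    obtain ⟨g, hg⟩ := sb_with_property F G hFinj hGinj
    refine ⟨g, fun x => ?_⟩
    rcases hg x with h | h
    · rw [h]
      exact hFle x
    · calc A x = A (G (g x)) := by rw [h]
        _ ≤ B (g x) := hGle (g x)
  · -- part (ii)
    rintro ⟨h, hh⟩
    have hcount' : ∀ n : ℕ, {x : I | A x ≤ n}.ncard ≤ {y : I | B y ≤ n}.ncard := by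
      intro n
      refine Set.ncard_le_ncard_of_injOn (fun x => h.symm x) ?_
        h.symm.injective.injOn (hBle n)
      intro x hx
      have hx' : B (h.symm x) ≤ A (h (h.symm x)) := hh (h.symm x)
      rw [h.apply_symm_apply] at hx'
      exact le_trans hx' hx
    obtain ⟨x₁, x₂, hfx, hxne⟩ : ∃ x₁ x₂, f x₁ = f x₂ ∧ x₁ ≠ x₂ := by
      simp only [Function.Injective, not_forall] at hninj
      obtain ⟨a, b, hab, hne⟩ := hninj
      exact ⟨a, b, hab, hne⟩
    set n := B (f x₁) with hn
    have hx1A : A x₁ ≤ n := hle x₁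
    have hx2A : A x₂ ≤ n := by
      rw [hn, hfx]
      exact hle x₂
    obtain ⟨x', hx'f, hx'ne, hx'A⟩ :
        ∃ x', f x' = f x₁ ∧ x' ≠ σ (f x₁) ∧ A x' ≤ n := by
      by_cases hc : x₁ = σ (f x₁)
      · exact ⟨x₂, hfx.symm, fun hc2 => hxne (hc.trans hc2.symm), hx2A⟩
      · exact ⟨x₁, rfl, hc, hx1A⟩
    have himg : σ '' {y | B y ≤ n} ⊂ {x | A x ≤ n} := by
      constructor
      · rintro x ⟨y, hy, rfl⟩
        exact le_trans (hσle y) hy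
      · intro hsub
        obtain ⟨y, hy, hyx⟩ := hsub hx'A
        have hy' : y = f x₁ := by rw [← hx'f, ← hyx, hσf]
        have : x' = σ (f x₁) := by rw [← hyx, hy']
        exact hx'ne this
    have hlt : {y : I | B y ≤ n}.ncard < {x : I | A x ≤ n}.ncard := by
      rw [← Set.ncard_image_of_injective {y : I | B y ≤ n} hσinj]
      exact Set.ncard_lt_ncard himg (hAle n)
    exact absurd (hcount' n) (not_le.mpr hlt)
end

section
/- Let f : ℕ → ℝ be monotone (nondecreasing) and let L : Fin p → List U be a multicore input that is consistent with f. Let i₀ : Fin p and suppose L i₀ = u ++ x :: v for some lists u, v : List U and some page x : U. Define L' : Fin p → List U by L' i₀ = u ++ x :: x :: v and L' i = L i for every i ≠ i₀ (that is, L' repeats the request x immediately after its occurrence). Then L' is consistent with f. -/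
/-- A multicore input `L : Fin p → List U` is consistent with `f : ℕ → ℝ` if,
for every window size `w` and every choice of contiguous sublists (infixes)
`s i` of the `L i` of length at most `w`, the total number of distinct pages
occurring in the window is at most `f w`. -/
def MCConsistent {U : Type*} [DecidableEq U] {p : ℕ} (f : ℕ → ℝ)
    (L : Fin p → List U) : Prop :=
  ∀ (w : ℕ) (s : Fin p → List U),
    (∀ i, (s i) <:+: (L i)) → (∀ i, (s i).length ≤ w) →
    ((Finset.univ.biUnion fun i => (s i).toFinset).card : ℝ) ≤ f w

lemma key_prefix {U : Type*} [DecidableEq U] (u v : List U) (x : U) :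
    ∀ s : List U, s <+: u ++ x :: x :: v →
      ∃ s', s' <+: u ++ x :: v ∧ s'.toFinset = s.toFinset ∧ s'.length ≤ s.length := by
  induction u with
  | nil =>
    intro s hs
    rcases List.prefix_cons_iff.mp hs with rfl | ⟨t, rfl, ht⟩
    · exact ⟨[], by simp, rfl, le_rfl⟩
    rcases List.prefix_cons_iff.mp ht with rfl | ⟨t₂, rfl, ht₂⟩
    · exact ⟨[x], ⟨v, rfl⟩, rfl, by simp⟩
    · refine ⟨x :: t₂, by simpa using ht₂, ?_, by simp⟩
      simp [List.toFinset_cons, Finset.insert_idem]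
  | cons a u ih =>
    intro s hs
    rcases List.prefix_cons_iff.mp hs with rfl | ⟨t, rfl, ht⟩
    · exact ⟨[], by simp, rfl, le_rfl⟩
    obtain ⟨t', ht', htf, htl⟩ := ih t ht
    exact ⟨a :: t', by simpa using ht', by simp [htf], by simpa using htl⟩

lemma key_infix {U : Type*} [DecidableEq U] (u v : List U) (x : U) :
    ∀ s : List U, s <:+: u ++ x :: x :: v →
      ∃ s', s' <:+: u ++ x :: v ∧ s'.toFinset = s.toFinset ∧ s'.length ≤ s.length := by
  induction u with
  | nil =>
    intro s hs
    rcases List.infix_cons_iff.mp hs with hp | hi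
    · obtain ⟨s', h1, h2, h3⟩ := key_prefix [] v x s hp
      exact ⟨s', h1.isInfix, h2, h3⟩
    · exact ⟨s, by simpa using hi, rfl, le_rfl⟩
  | cons a u ih =>
    intro s hs
    rcases List.infix_cons_iff.mp hs with hp | hi
    · obtain ⟨s', h1, h2, h3⟩ := key_prefix (a :: u) v x s hp
      exact ⟨s', h1.isInfix, h2, h3⟩
    · obtain ⟨s', h1, h2, h3⟩ := ih s hi
      refine ⟨s', ?_, h2, h3⟩
      rw [List.cons_append]
      exact List.infix_cons h1

/-- repeating a request immediately after its occurrence preserves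
consistency with a monotone concave-bound function `f`. -/
theorem stmt_8 {U : Type*} [DecidableEq U] {p : ℕ} (f : ℕ → ℝ)
    (hf : Monotone f) (L : Fin p → List U) (hL : MCConsistent f L)
    (i₀ : Fin p) (u v : List U) (x : U) (hsplit : L i₀ = u ++ x :: v)
    (L' : Fin p → List U) (hL'i₀ : L' i₀ = u ++ x :: x :: v)
    (hL' : ∀ i : Fin p, i ≠ i₀ → L' i = L i) :
    MCConsistent f L' := by
  intro w s hinf hlen
  obtain ⟨s₀, hs1, hs2, hs3⟩ := key_infix u v x (s i₀) (by rw [← hL'i₀]; exact hinf i₀)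
  classical
  set t : Fin p → List U := fun i => if i = i₀ then s₀ else s i with ht
  have h1 : ∀ i, t i <:+: L i := by
    intro i
    by_cases h : i = i₀
    · subst h; simpa [ht, hsplit] using hs1
    · simpa [ht, h, hL' i h] using hinf i
  have h2 : ∀ i, (t i).length ≤ w := by
    intro i
    by_cases h : i = i₀
    · simp only [ht]; rw [if_pos h]; exact hs3.trans (hlen i₀)
    · simpa [ht, h] using hlen i
  have := hL w t h1 h2
  have heq : (Finset.univ.biUnion fun i => (t i).toFinset) =
      (Finset.univ.biUnion fun i => (s i).toFinset) := by
    apply Finset.biUnion_congr rfl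
    intro i _
    by_cases h : i = i₀
    · subst h; simp [ht, hs2]
    · simp [ht, h]
  rwa [heq] at this
end

section
/- Let f : ℕ → ℝ, let β, δ : U be pages with β ≠ δ, and let P, S : List U. Assume: (i) the list P ++ S is consistent with f; (ii) β occurs in P, and writing P = P₁ ++ β :: P₂ with β ∉ P₂ (so this exhibits the last occurrence of β in P), the page δ does not occur in P₂ (δ does not appear in P after the last occurrence of β); and (iii) the list P ++ (S.map (Equiv.swap β δ)) is NOT consistent with f. Then β occurs in S, and writing S = S₁ ++ β :: S₂ with β ∉ S₁ (so this exhibits the first occurrence of β in S), the page δ does not occur in S₁ (no request to δ in S occurs earlier than the first request to β in S). -/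
/-- A list `l : List U` is consistent with `f : ℕ → ℝ` if every contiguous
sublist (infix) `s` of `l` contains at most `f s.length` distinct pages. -/
def ListConsistent {U : Type*} [DecidableEq U] (f : ℕ → ℝ) (l : List U) : Prop :=
  ∀ s : List U, s <:+: l → ((s.toFinset.card : ℝ)) ≤ f s.length

private lemma list_toFinset_map {U : Type*} [DecidableEq U] (g : U → U) (l : List U) :
    (l.map g).toFinset = l.toFinset.image g := by
  ext x; simp

/-- Decomposition of an infix of an append. -/
private lemma infix_append_decomp {U : Type*} {s l₁ l₂ : List U} (h : s <:+: l₁ ++ l₂) :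
    s <:+: l₁ ∨ s <:+: l₂ ∨ ∃ p q, s = p ++ q ∧ p <:+ l₁ ∧ q <+: l₂ := by
  obtain ⟨t, u, htu⟩ := h
  rcases le_or_gt l₁.length t.length with hle | hlt
  · -- s is inside l₂
    have ht : l₁ <+: t :=
      List.prefix_of_prefix_length_le ⟨l₂, rfl⟩
        ⟨s ++ u, by simpa [List.append_assoc] using htu⟩ hle
    obtain ⟨t', rfl⟩ := ht
    right; left
    refine ⟨t', u, ?_⟩
    have := htu
    rw [List.append_assoc, List.append_assoc] at this
    have := List.append_cancel_left this
    simpa [List.append_assoc] using this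
  · rcases le_or_gt (t.length + s.length) l₁.length with hle2 | hlt2
    · -- s is inside l₁
      left
      have hts : (t ++ s) <+: l₁ :=
        List.prefix_of_prefix_length_le ⟨u, by simpa [List.append_assoc] using htu⟩
          ⟨l₂, rfl⟩ (by simpa using hle2)
      obtain ⟨v, hv⟩ := hts
      exact ⟨t, v, by simpa [List.append_assoc] using hv⟩
    · -- straddle
      right; right
      have ht : t <+: l₁ :=
        List.prefix_of_prefix_length_le ⟨s ++ u, by simpa [List.append_assoc] using htu⟩
          ⟨l₂, rfl⟩ hlt.le
      obtain ⟨p, hp⟩ := ht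
      have hsu : s ++ u = p ++ l₂ := by
        have : t ++ (s ++ u) = t ++ (p ++ l₂) := by
          rw [← List.append_assoc, htu, ← hp, List.append_assoc]
        exact List.append_cancel_left this
      have hpl : p.length ≤ s.length := by
        have : t.length + p.length = l₁.length := by
          rw [← hp]; simp
        omega
      have hps : p <+: s :=
        List.prefix_of_prefix_length_le ⟨l₂, hsu.symm⟩ ⟨u, rfl⟩ hpl
      obtain ⟨q, hq⟩ := hps
      refine ⟨p, q, hq.symm, ⟨t, hp⟩, ?_⟩
      have : p ++ (q ++ u) = p ++ l₂ := by
        rw [← List.append_assoc, hq]; exact hsu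
      exact ⟨u, List.append_cancel_left this⟩

/-- Key cardinality lemma about swapping. -/
private lemma card_union_image_swap {U : Type*} [DecidableEq U] {β δ : U}
    (A B : Finset U)
    (h1 : ¬(β ∈ A ∧ β ∈ B ∧ δ ∉ A ∧ δ ∉ B))
    (h2 : ¬(δ ∈ A ∧ δ ∈ B ∧ β ∉ A ∧ β ∉ B)) :
    (A ∪ B.image (Equiv.swap β δ)).card ≤ (A ∪ B).card := by
  set σ : U → U := ⇑(Equiv.swap β δ) with hσ
  by_cases hA : (β ∈ A ↔ δ ∈ A)
  · -- A ∪ σB ⊆ σ(A ∪ B), and images have the same card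
    have hsub : A ∪ B.image σ ⊆ (A ∪ B).image σ := by
      intro x hx
      rcases Finset.mem_union.1 hx with hxA | hxB
      · rcases eq_or_ne x β with rfl | hxβ
        · exact Finset.mem_image.2 ⟨δ, Finset.mem_union_left _ (hA.1 hxA),
            by simp [hσ, Equiv.swap_apply_right]⟩
        · rcases eq_or_ne x δ with rfl | hxδ
          · exact Finset.mem_image.2 ⟨β, Finset.mem_union_left _ (hA.2 hxA),
              by simp [hσ, Equiv.swap_apply_left]⟩
          · exact Finset.mem_image.2 ⟨x, Finset.mem_union_left _ hxA,
              by simp [hσ, Equiv.swap_apply_of_ne_of_ne hxβ hxδ]⟩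
      · obtain ⟨y, hy, rfl⟩ := Finset.mem_image.1 hxB
        exact Finset.mem_image.2 ⟨y, Finset.mem_union_right _ hy, rfl⟩
    calc (A ∪ B.image σ).card ≤ ((A ∪ B).image σ).card := Finset.card_le_card hsub
      _ = (A ∪ B).card := Finset.card_image_of_injective _ (Equiv.swap β δ).injective
  · -- exactly one of β, δ is in A; show A ∪ σB ⊆ A ∪ B
    apply Finset.card_le_card
    intro x hx
    rcases Finset.mem_union.1 hx with hxA | hxB
    · exact Finset.mem_union_left _ hxA
    · obtain ⟨y, hy, rfl⟩ := Finset.mem_image.1 hxB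
      rcases eq_or_ne y β with hyb | hyβ
      · -- σ y = δ; need δ ∈ A ∪ B
        rw [hyb, hσ, Equiv.swap_apply_left]
        rw [hyb] at hy
        by_contra hδ
        have hδA : δ ∉ A := fun h => hδ (Finset.mem_union_left _ h)
        have hδB : δ ∉ B := fun h => hδ (Finset.mem_union_right _ h)
        have hβA : β ∈ A := by tauto
        exact h1 ⟨hβA, hy, hδA, hδB⟩
      · rcases eq_or_ne y δ with hyd | hyδ
        · rw [hyd, hσ, Equiv.swap_apply_right]
          rw [hyd] at hy
          by_contra hβ
          have hβA : β ∉ A := fun h => hβ (Finset.mem_union_left _ h)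
          have hβB : β ∉ B := fun h => hβ (Finset.mem_union_right _ h)
          have hδA : δ ∈ A := by tauto
          exact h2 ⟨hδA, hy, hβA, hβB⟩
        · rw [hσ, Equiv.swap_apply_of_ne_of_ne hyβ hyδ]
          exact Finset.mem_union_right _ hy

/-- if `P ++ S` is consistent with `f`, `δ` does not appear in `P`
after the last occurrence of `β` in `P`, and the complement
`P ++ S.map (Equiv.swap β δ)` is not consistent with `f`, then `β` occurs in
`S` and no request to `δ` in `S` occurs earlier than the first request to `β`
in `S`. -/
theorem stmt_9 {U : Type*} [DecidableEq U] (f : ℕ → ℝ) (β δ : U) (hβδ : β ≠ δ)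
    (P S : List U) (P₁ P₂ : List U)
    (hP : P = P₁ ++ β :: P₂) (hβP₂ : β ∉ P₂) (hδP₂ : δ ∉ P₂)
    (hcons : ListConsistent f (P ++ S))
    (hncons : ¬ ListConsistent f (P ++ S.map (Equiv.swap β δ))) :
    β ∈ S ∧ ∀ S₁ S₂ : List U, S = S₁ ++ β :: S₂ → β ∉ S₁ → δ ∉ S₁ := by
  by_contra hcon
  -- Derive: any prefix of S containing β contains δ
  have key : ∀ m : List U, m <+: S → β ∈ m → δ ∈ m := by
    intro m hm hβm
    by_cases hβS : β ∈ S
    · push_neg at hcon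
      obtain ⟨S₁, S₂, hS, hβS₁, hδS₁⟩ := hcon hβS
      -- S₁ is a prefix of m
      have hS₁m : S₁ <+: m := by
        rcases List.prefix_or_prefix_of_prefix hm (⟨β :: S₂, hS.symm⟩ : S₁ <+: S) with h | h
        · exact absurd (h.subset hβm) hβS₁
        · exact h
      exact hS₁m.subset hδS₁
    · exact absurd (hm.subset hβm) hβS
  -- any suffix of P not containing β does not contain δ
  have keyP : ∀ p : List U, p <:+ P → β ∉ p → δ ∉ p := by
    intro p hp hβp
    have hp2 : p <:+ P₂ := by
      have h1 : (β :: P₂) <:+ P := ⟨P₁, hP.symm⟩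
      rcases List.suffix_or_suffix_of_suffix hp h1 with h | h
      · rcases List.suffix_cons_iff.1 h with h' | h'
        · exact absurd (h'.symm ▸ List.mem_cons_self (a := β) (l := P₂)) hβp
        · exact h'
      · exact absurd (h.subset (List.mem_cons_self (a := β) (l := P₂))) hβp
    exact fun hδp => hδP₂ (hp2.subset hδp)
  -- Show the complement is consistent: contradiction
  apply hncons
  intro s hs
  set σ : U → U := ⇑(Equiv.swap β δ) with hσ
  rcases infix_append_decomp hs with hsP | hsS | ⟨p, q, rfl, hpP, hqS⟩
  · exact hcons s (hsP.trans (List.prefix_append P S).isInfix)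
  · -- s is an infix of S.map σ; pull back
    obtain ⟨t, hst, htS⟩ := List.infix_iff_prefix_suffix.1 hsS
    rw [List.suffix_iff_eq_drop] at htS
    rw [List.prefix_iff_eq_take] at hst
    set t₀ := S.drop ((S.map σ).length - t.length) with ht₀
    have ht : t = t₀.map σ := by rw [htS, List.map_drop]
    set s₀ := t₀.take s.length with hs₀
    have hseq : s = s₀.map σ := by rw [hst, ht, List.map_take]
    have hs₀S : s₀ <:+: S := ((t₀.take_prefix s.length).isInfix).trans
      ((S.drop_suffix _).isInfix)
    have hlen : s.length = s₀.length := by rw [hseq, List.length_map]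
    have hcard : s.toFinset.card = s₀.toFinset.card := by
      rw [hseq, list_toFinset_map, Finset.card_image_of_injective _ (Equiv.swap β δ).injective]
    rw [hlen, hcard]
    exact hcons s₀ (hs₀S.trans (List.suffix_append P S).isInfix)
  · -- straddle case
    rw [List.prefix_iff_eq_take] at hqS
    set q₀ := S.take q.length with hq₀
    have hq : q = q₀.map σ := by rw [hqS, List.map_take]
    have hq₀S : q₀ <+: S := S.take_prefix _
    -- consistency applied to p ++ q₀
    have hinf : (p ++ q₀) <:+: (P ++ S) := by
      obtain ⟨a, ha⟩ := hpP
      obtain ⟨b, hb⟩ := hq₀S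
      exact ⟨a, b, by rw [← ha, ← hb]; simp [List.append_assoc]⟩
    have hbound := hcons (p ++ q₀) hinf
    have hlen : (p ++ q).length = (p ++ q₀).length := by
      simp [hq, List.length_map]
    rw [hlen]
    refine le_trans ?_ hbound
    have hfin : (p ++ q).toFinset = p.toFinset ∪ q₀.toFinset.image σ := by
      rw [List.toFinset_append, hq, list_toFinset_map]
    have hfin2 : (p ++ q₀).toFinset = p.toFinset ∪ q₀.toFinset := List.toFinset_append
    rw [hfin, hfin2]
    have hle : (p.toFinset ∪ q₀.toFinset.image σ).card ≤ (p.toFinset ∪ q₀.toFinset).card := by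
      apply card_union_image_swap
      · rintro ⟨hβp, hβq, hδp, hδq⟩
        exact hδq (List.mem_toFinset.2 (key q₀ hq₀S (List.mem_toFinset.1 hβq)))
      · rintro ⟨hδp, hδq, hβp, hβq⟩
        exact keyP p hpP (fun h => hβp (List.mem_toFinset.2 h))
          (List.mem_toFinset.1 hδp)
    exact_mod_cast hle
end
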